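/- Let ν be a Borel measure on B with ∫_B |l| ν(dl) < ∞. Assume that for each ε ∈ (0,1], l ∈ B and v ∈ L² there is a continuous Φ(·,ε,l,v) : [0,ε] → L² satisfying Φ(t,ε,l,v) = v + l ∫₀ᵗ ḡ(Φ(s,ε,l,v)) ds for all t ∈ [0,ε], depending measurably on l, and define H(ε,l,v) := Φ(ε,ε,l,v) − v − ε l ḡ(v) and b(ε,v) := ∫_B H(ε,l,v) ν(dl) (a Bochner integral in L²). Then there exists a constant C > 0, depending only on h, μ and ν, such that for every ε ∈ (0,1] and every v ∈ L²: ‖b(ε,v)‖_{L²} ≤ C (e^{Cε} − 1)(1 + ‖v‖_{L²}). -/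

import Mathlib

open MeasureTheory
open scoped RealInnerProductSpace ENNReal

/-- The cross product on `ℝ³ = EuclideanSpace ℝ (Fin 3)`. -/
noncomputable def cross3 (a b : EuclideanSpace ℝ (Fin 3)) : EuclideanSpace ℝ (Fin 3) :=
  WithLp.toLp 2 ![a 1 * b 2 - a 2 * b 1, a 2 * b 0 - a 0 * b 2, a 0 * b 1 - a 1 * b 0]

lemma cross3_sub (a b c : EuclideanSpace ℝ (Fin 3)) :
    cross3 (a - b) c = cross3 a c - cross3 b c := by
  ext i
  fin_cases i <;>
    simp [cross3, PiLp.sub_apply] <;> ring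

lemma cross3_norm_le (a b : EuclideanSpace ℝ (Fin 3)) : ‖cross3 a b‖ ≤ ‖a‖ * ‖b‖ := by
  have h1 : ‖a‖ * ‖b‖ = Real.sqrt ((∑ i, ‖a i‖ ^ 2) * (∑ i, ‖b i‖ ^ 2)) := by
    rw [EuclideanSpace.norm_eq, EuclideanSpace.norm_eq,
      Real.sqrt_mul (by positivity)]
  rw [EuclideanSpace.norm_eq, h1]
  apply Real.sqrt_le_sqrt
  simp only [Fin.sum_univ_three, Real.norm_eq_abs, sq_abs, cross3, PiLp.toLp_apply,
    Matrix.cons_val_zero, Matrix.cons_val_one, Matrix.head_cons,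
    Matrix.cons_val_two, Matrix.tail_cons]
  nlinarith [sq_nonneg (a 0 * b 0 + a 1 * b 1 + a 2 * b 2), sq_nonneg (a 0), sq_nonneg (b 0)]


set_option maxHeartbeats 1000000 in
/-- growth of `b(ε,v) = ∫_B H(ε,l,v) ν(dl)` where
`H(ε,l,v) = Φ(ε,ε,l,v) − v − ε l ḡ(v)`, for a measure `ν` on `B` with `∫_B |l| ν(dl) < ∞`:
`‖b(ε,v)‖ ≤ C (e^{Cε} − 1)(1 + ‖v‖)`. -/
theorem marcus_b_eps_growth
    {𝒪 : Type*} [MeasurableSpace 𝒪] (μ : Measure 𝒪) [IsFiniteMeasure μ]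
    (h : 𝒪 → EuclideanSpace ℝ (Fin 3)) (hmeas : Measurable h) (hbdd : MemLp h ⊤ μ)
    (gbar : Lp (EuclideanSpace ℝ (Fin 3)) 2 μ → Lp (EuclideanSpace ℝ (Fin 3)) 2 μ)
    (hgbar : ∀ v, ∀ᵐ x ∂μ, gbar v x = cross3 (v x) (h x) + h x)
    (ν : Measure ℝ) (hνB : ∀ᵐ l ∂ν, 0 < |l| ∧ |l| < 1)
    (hνint : ∫⁻ l, ENNReal.ofReal |l| ∂ν < ⊤)
    (Φ : ℝ → ℝ → ℝ → Lp (EuclideanSpace ℝ (Fin 3)) 2 μ → Lp (EuclideanSpace ℝ (Fin 3)) 2 μ)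
    (hΦc : ∀ (ε : ℝ), 0 < ε → ε ≤ 1 → ∀ (l : ℝ), 0 < |l| → |l| < 1 →
      ∀ v, ContinuousOn (fun t => Φ t ε l v) (Set.Icc 0 ε))
    (hΦeq : ∀ (ε : ℝ), 0 < ε → ε ≤ 1 → ∀ (l : ℝ), 0 < |l| → |l| < 1 →
      ∀ v, ∀ t ∈ Set.Icc (0:ℝ) ε, Φ t ε l v = v + l • ∫ s in (0:ℝ)..t, gbar (Φ s ε l v))
    (hΦmeas : ∀ (ε : ℝ), 0 < ε → ε ≤ 1 →
      ∀ v, AEStronglyMeasurable (fun l => Φ ε ε l v) ν) :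
    ∃ C : ℝ, 0 < C ∧
      ∀ (ε : ℝ), 0 < ε → ε ≤ 1 →
      ∀ v : Lp (EuclideanSpace ℝ (Fin 3)) 2 μ,
        ‖∫ l, (Φ ε ε l v - v - (ε * l) • gbar v) ∂ν‖
          ≤ C * (Real.exp (C * ε) - 1) * (1 + ‖v‖) := by
  classical
  set M : ℝ := (eLpNorm h ⊤ μ).toReal with hMdef
  have hM0 : 0 ≤ M := ENNReal.toReal_nonneg
  -- a.e. bound on h
  have hae : ∀ᵐ x ∂μ, ‖h x‖ ≤ M := by
    filter_upwards [ae_le_eLpNormEssSup (f := h) (μ := μ)] with x hx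
    have h2 : (‖h x‖₊ : ℝ≥0∞).toReal ≤ M := by
      apply ENNReal.toReal_mono
      · rw [hMdef, eLpNorm_exponent_top] at *
        exact hbdd.2.ne
      · exact (by simpa [eLpNorm_exponent_top] using hx : ‖h x‖ₑ ≤ _)
    simpa using h2
  -- Lipschitz bound for gbar
  have hlip : ∀ u w, ‖gbar u - gbar w‖ ≤ M * ‖u - w‖ := by
    intro u w
    apply Lp.norm_le_mul_norm_of_ae_le_mul
    filter_upwards [hgbar u, hgbar w, Lp.coeFn_sub (gbar u) (gbar w), Lp.coeFn_sub u w, hae]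
      with x h1 h2 h3 h4 h5
    rw [h3, Pi.sub_apply, h1, h2, h4, Pi.sub_apply]
    have h6 : (cross3 (u x) (h x) + h x) - (cross3 (w x) (h x) + h x)
        = cross3 (u x - w x) (h x) := by
      rw [cross3_sub]; abel
    rw [h6]
    calc ‖cross3 ((u : 𝒪 → EuclideanSpace ℝ (Fin 3)) x - w x) (h x)‖
        ≤ ‖(u : 𝒪 → EuclideanSpace ℝ (Fin 3)) x - w x‖ * ‖h x‖ := cross3_norm_le _ _
      _ ≤ ‖(u : 𝒪 → EuclideanSpace ℝ (Fin 3)) x - w x‖ * M := by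
          exact mul_le_mul_of_nonneg_left h5 (norm_nonneg _)
      _ = M * ‖(u : 𝒪 → EuclideanSpace ℝ (Fin 3)) x - w x‖ := mul_comm _ _
  have hgc : Continuous gbar := by
    have : LipschitzWith (Real.toNNReal M) gbar := by
      apply LipschitzWith.of_dist_le_mul
      intro u w
      rw [dist_eq_norm, dist_eq_norm]
      calc ‖gbar u - gbar w‖ ≤ M * ‖u - w‖ := hlip u w
        _ ≤ (Real.toNNReal M) * ‖u - w‖ := by
            exact mul_le_mul_of_nonneg_right (Real.le_coe_toNNReal M) (norm_nonneg _)
    exact this.continuous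
  set G0 : ℝ := ‖gbar 0‖ with hG0def
  have hG0 : 0 ≤ G0 := norm_nonneg _
  have hgrow : ∀ w, ‖gbar w‖ ≤ M * ‖w‖ + G0 := by
    intro w
    calc ‖gbar w‖ = ‖(gbar w - gbar 0) + gbar 0‖ := by rw [sub_add_cancel]
      _ ≤ ‖gbar w - gbar 0‖ + ‖gbar 0‖ := norm_add_le _ _
      _ ≤ M * ‖w - 0‖ + G0 := add_le_add (hlip w 0) le_rfl
      _ = M * ‖w‖ + G0 := by rw [sub_zero]
  -- the key per-l estimate
  have key : ∀ ε : ℝ, 0 < ε → ε ≤ 1 → ∀ l : ℝ, 0 < |l| → |l| < 1 →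
      ∀ v : Lp (EuclideanSpace ℝ (Fin 3)) 2 μ,
      ‖Φ ε ε l v - v - (ε * l) • gbar v‖
        ≤ |l| * ((M + G0) * ((Real.exp ((M + 1) * ε) - 1) * (1 + ‖v‖))) := by
    intro ε hε hε1 l hl0 hl1 v
    set c : ℝ → ℝ := fun s => max 0 (min s ε) with hcdef
    have hcmem : ∀ s, c s ∈ Set.Icc (0:ℝ) ε :=
      fun s => ⟨le_max_left _ _, max_le hε.le (min_le_right _ _)⟩
    have hceq : ∀ s ∈ Set.Icc (0:ℝ) ε, c s = s := by
      intro s hs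
      rw [hcdef]
      simp only [min_eq_left hs.2, max_eq_right hs.1]
    have hccont : Continuous c := continuous_const.max (continuous_id.min continuous_const)
    set Ψ : ℝ → Lp (EuclideanSpace ℝ (Fin 3)) 2 μ := fun s => Φ (c s) ε l v with hΨdef
    have hΨc : Continuous Ψ :=
      (hΦc ε hε hε1 l hl0 hl1 v).comp_continuous hccont hcmem
    set u : ℝ → Lp (EuclideanSpace ℝ (Fin 3)) 2 μ := fun s => gbar (Ψ s) with hudef
    have huc : Continuous u := hgc.comp hΨc
    set φ : ℝ → ℝ := fun s => ‖Ψ s - v‖ with hφdef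
    have hφc : Continuous φ := (hΨc.sub continuous_const).norm
    have hφ0 : ∀ s, 0 ≤ φ s := fun s => norm_nonneg _
    have heqt : ∀ t ∈ Set.Icc (0:ℝ) ε, Ψ t = v + l • ∫ s in (0:ℝ)..t, u s := by
      intro t ht
      have h1 : Ψ t = Φ t ε l v := by rw [hΨdef]; simp only [hceq t ht]
      rw [h1, hΦeq ε hε hε1 l hl0 hl1 v t ht]
      congr 1
      congr 1
      apply intervalIntegral.integral_congr
      intro s hs
      have hs' : s ∈ Set.Icc 0 t := by rwa [Set.uIcc_of_le ht.1] at hs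
      rw [hudef]
      simp only [hΨdef, hceq s ⟨hs'.1, hs'.2.trans ht.2⟩]
    set A : ℝ := M * ‖v‖ + G0 with hAdef
    have hA0 : 0 ≤ A := by positivity
    have hAv : ∀ s, ‖u s‖ ≤ M * φ s + A := by
      intro s
      calc ‖u s‖ = ‖(u s - gbar v) + gbar v‖ := by rw [sub_add_cancel]
        _ ≤ ‖u s - gbar v‖ + ‖gbar v‖ := norm_add_le _ _
        _ ≤ M * ‖Ψ s - v‖ + (M * ‖v‖ + G0) := add_le_add (hlip _ _) (hgrow v)
        _ = M * φ s + A := rfl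
    set G : ℝ → ℝ := fun t => ∫ s in (0:ℝ)..t, φ s with hGdef
    have hG' : ∀ t, HasDerivAt G (φ t) t :=
      fun t => (hφc.integral_hasStrictDerivAt 0 t).hasDerivAt
    have hGc : Continuous G :=
      continuous_iff_continuousAt.2 fun t => (hG' t).differentiableAt.continuousAt
    have hGnn : ∀ t ∈ Set.Icc (0:ℝ) ε, 0 ≤ G t := by
      intro t ht
      exact intervalIntegral.integral_nonneg ht.1 (fun s _ => hφ0 s)
    have stepA : ∀ t ∈ Set.Icc (0:ℝ) ε, φ t ≤ M * G t + A * t := by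
      intro t ht
      have h2 : Ψ t - v = l • ∫ s in (0:ℝ)..t, u s := by
        rw [heqt t ht]; abel
      have h3 : φ t = |l| * ‖∫ s in (0:ℝ)..t, u s‖ := by
        rw [hφdef]; simp only [h2, norm_smul, Real.norm_eq_abs]
      have h4 : ∫ s in (0:ℝ)..t, (M * φ s + A) = M * G t + A * t := by
        rw [intervalIntegral.integral_add (f := fun s => M * φ s) (g := fun _ => A) ((continuous_const.mul hφc).intervalIntegrable _ _)
          (intervalIntegrable_const), intervalIntegral.integral_const_mul,
          intervalIntegral.integral_const]
        simp [hGdef, smul_eq_mul, mul_comm]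
      calc φ t = |l| * ‖∫ s in (0:ℝ)..t, u s‖ := h3
        _ ≤ 1 * ‖∫ s in (0:ℝ)..t, u s‖ :=
            mul_le_mul_of_nonneg_right hl1.le (norm_nonneg _)
        _ = ‖∫ s in (0:ℝ)..t, u s‖ := one_mul _
        _ ≤ ∫ s in (0:ℝ)..t, ‖u s‖ := intervalIntegral.norm_integral_le_integral_norm ht.1
        _ ≤ ∫ s in (0:ℝ)..t, (M * φ s + A) := by
            apply intervalIntegral.integral_mono_on ht.1
              (huc.norm.intervalIntegrable _ _)
              (((continuous_const.mul hφc).add continuous_const).intervalIntegrable _ _)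
            exact fun s _ => hAv s
        _ = M * G t + A * t := h4
    have hK : (0:ℝ) < M + 1 := by linarith
    have gron := norm_le_gronwallBound_of_norm_deriv_right_le (f := G) (f' := φ)
      (δ := 0) (K := M + 1) (ε := A * ε) (a := 0) (b := ε)
      hGc.continuousOn (fun t _ => (hG' t).hasDerivWithinAt)
      (by simp [hGdef, intervalIntegral.integral_same])
      (by
        intro t ht
        have h5 := stepA t (Set.Ico_subset_Icc_self ht)
        have h6 := hGnn t (Set.Ico_subset_Icc_self ht)
        rw [Real.norm_eq_abs, abs_of_nonneg (hφ0 t), Real.norm_eq_abs, abs_of_nonneg h6]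
        nlinarith [ht.1, ht.2.le, hA0, hM0])
    have hGε : G ε * (M + 1) ≤ A * ε * (Real.exp ((M + 1) * ε) - 1) := by
      have h7 := gron ε ⟨hε.le, le_rfl⟩
      rw [Real.norm_eq_abs, abs_of_nonneg (hGnn ε ⟨hε.le, le_rfl⟩),
        gronwallBound_of_K_ne_0 hK.ne'] at h7
      simp only [zero_mul, zero_add, sub_zero] at h7
      rw [div_mul_eq_mul_div, le_div_iff₀ hK] at h7
      linarith
    have hE1 : (0:ℝ) ≤ Real.exp ((M + 1) * ε) - 1 :=
      sub_nonneg.2 (Real.one_le_exp (by positivity))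
    -- the H identity
    have hPsiε : Φ ε ε l v = Ψ ε := by
      rw [hΨdef]; simp only [hceq ε ⟨hε.le, le_rfl⟩]
    have hHeq : Φ ε ε l v - v - (ε * l) • gbar v
        = l • ∫ s in (0:ℝ)..ε, (u s - gbar v) := by
      rw [hPsiε, heqt ε ⟨hε.le, le_rfl⟩,
        intervalIntegral.integral_sub (huc.intervalIntegrable _ _) intervalIntegrable_const,
        intervalIntegral.integral_const, smul_sub, sub_zero]
      have h8 : (ε * l) • gbar v = l • (ε • gbar v) := by
        rw [smul_smul, mul_comm]
      rw [h8]; abel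
    have hnorm : ‖Φ ε ε l v - v - (ε * l) • gbar v‖ ≤ |l| * (M * G ε) := by
      rw [hHeq, norm_smul, Real.norm_eq_abs]
      apply mul_le_mul_of_nonneg_left _ (abs_nonneg l)
      calc ‖∫ s in (0:ℝ)..ε, (u s - gbar v)‖
          ≤ ∫ s in (0:ℝ)..ε, ‖u s - gbar v‖ :=
            intervalIntegral.norm_integral_le_integral_norm hε.le
        _ ≤ ∫ s in (0:ℝ)..ε, M * φ s := by
            apply intervalIntegral.integral_mono_on hε.le
              ((huc.sub continuous_const).norm.intervalIntegrable _ _)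
              ((continuous_const.mul hφc).intervalIntegrable _ _)
            exact fun s _ => hlip _ _
        _ = M * G ε := by rw [intervalIntegral.integral_const_mul]
    refine hnorm.trans (mul_le_mul_of_nonneg_left ?_ (abs_nonneg l))
    have hGnnε := hGnn ε ⟨hε.le, le_rfl⟩
    have s1 : M * G ε ≤ G ε * (M + 1) := by nlinarith [hGnnε]
    have s2 : A * ε * (Real.exp ((M + 1) * ε) - 1)
        ≤ A * (Real.exp ((M + 1) * ε) - 1) := by
      nlinarith [mul_nonneg (mul_nonneg hA0 hE1) (sub_nonneg.2 hε1)]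
    have s3 : A * (Real.exp ((M + 1) * ε) - 1)
        ≤ (M + G0) * ((Real.exp ((M + 1) * ε) - 1) * (1 + ‖v‖)) := by
      nlinarith [mul_nonneg hE1 (add_nonneg hM0 (mul_nonneg hG0 (norm_nonneg v)))]
    linarith [s1.trans (hGε.trans (s2.trans s3))]
  -- integrability of |l|
  have hl_int : Integrable (fun l : ℝ => |l|) ν := by
    refine ⟨continuous_abs.aestronglyMeasurable, ?_⟩
    rw [hasFiniteIntegral_iff_norm]
    simpa [Real.norm_eq_abs, abs_abs] using hνint
  set Lν : ℝ := ∫ l, |l| ∂ν with hLdef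
  have hLν0 : 0 ≤ Lν := integral_nonneg fun l => abs_nonneg l
  refine ⟨max (M + 1) (Lν * (M + G0) + 1), lt_of_lt_of_le (by linarith) (le_max_left _ _), ?_⟩
  set C : ℝ := max (M + 1) (Lν * (M + G0) + 1) with hCdef
  have hCK : M + 1 ≤ C := le_max_left _ _
  have hCL : Lν * (M + G0) ≤ C := by
    have := le_max_right (M + 1) (Lν * (M + G0) + 1)
    linarith
  have hC0 : 0 ≤ C := by linarith
  intro ε hε hε1 v
  set D : ℝ := (M + G0) * ((Real.exp ((M + 1) * ε) - 1) * (1 + ‖v‖)) with hDdef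
  have hE1 : (0:ℝ) ≤ Real.exp ((M + 1) * ε) - 1 :=
    sub_nonneg.2 (Real.one_le_exp (by positivity))
  have hv0 : (0:ℝ) ≤ 1 + ‖v‖ := by positivity
  have hae_bd : ∀ᵐ l ∂ν, ‖Φ ε ε l v - v - (ε * l) • gbar v‖ ≤ |l| * D := by
    filter_upwards [hνB] with l hl
    exact key ε hε hε1 l hl.1 hl.2 v
  calc ‖∫ l, (Φ ε ε l v - v - (ε * l) • gbar v) ∂ν‖
      ≤ ∫ l, ‖Φ ε ε l v - v - (ε * l) • gbar v‖ ∂ν := norm_integral_le_integral_norm _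
    _ ≤ ∫ l, |l| * D ∂ν :=
        integral_mono_of_nonneg (Filter.Eventually.of_forall fun l => norm_nonneg _)
          (hl_int.mul_const D) hae_bd
    _ = Lν * D := by rw [integral_mul_const]
    _ ≤ C * (Real.exp (C * ε) - 1) * (1 + ‖v‖) := by
        have e1 : Real.exp ((M + 1) * ε) - 1 ≤ Real.exp (C * ε) - 1 := by
          have := Real.exp_le_exp.2 (mul_le_mul_of_nonneg_right hCK hε.le)
          linarith
        have e2 : Lν * D = (Lν * (M + G0)) * ((Real.exp ((M + 1) * ε) - 1) * (1 + ‖v‖)) := by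
          rw [hDdef]; ring
        rw [e2]
        calc (Lν * (M + G0)) * ((Real.exp ((M + 1) * ε) - 1) * (1 + ‖v‖))
            ≤ C * ((Real.exp (C * ε) - 1) * (1 + ‖v‖)) := by
              apply mul_le_mul hCL
                (mul_le_mul_of_nonneg_right e1 hv0)
                (mul_nonneg hE1 hv0) hC0
          _ = C * (Real.exp (C * ε) - 1) * (1 + ‖v‖) := by ring
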